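/- The function f(x) = −2/x − (1 − 2/x)·log₂(x − 2) + log₂ x, defined for x > 2, satisfies f(4) = 1, is strictly increasing on (2,4] and strictly decreasing on [4,∞); in particular x = 4 is its unique global maximizer on (2,∞) and f(x) < 1 for every x ∈ (2,∞) with x ≠ 4. -/

import Mathlib

open Real Set

private lemma stmt10_hasDeriv (x : ℝ) (hx : 2 < x) :
    HasDerivAt (fun x : ℝ => -2 / x - (1 - 2 / x) * Real.logb 2 (x - 2) + Real.logb 2 x)
      (2 / x ^ 2 * (1 - Real.logb 2 (x - 2))) x := by
  have hx0 : x ≠ 0 := by positivity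
  have hx2 : x - 2 ≠ 0 := by intro h; nlinarith [h]
  have hlog2 : Real.log 2 ≠ 0 := ne_of_gt (Real.log_pos one_lt_two)
  have h1 : HasDerivAt (fun y : ℝ => -2 / y) (2 / x ^ 2) x := by
    have h := (hasDerivAt_inv hx0).const_mul (-2 : ℝ)
    have heq : (fun y : ℝ => -2 / y) = fun y : ℝ => -2 * y⁻¹ := by funext y; ring
    rw [heq]
    rw [show (2:ℝ) / x ^ 2 = -2 * -(x ^ 2)⁻¹ by ring]
    exact h
  have h3 : HasDerivAt (fun y : ℝ => 1 - 2 / y) (2 / x ^ 2) x := by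
    have h := h1.const_add 1
    have heq : (fun y : ℝ => 1 - 2 / y) = fun y : ℝ => 1 + -2 / y := by funext y; ring
    rw [heq]; exact h
  have hL : HasDerivAt (fun y : ℝ => Real.logb 2 (y - 2)) (1 / (x - 2) / Real.log 2) x := by
    have h := (((hasDerivAt_id x).sub_const 2).log hx2).div_const (Real.log 2)
    simpa [Real.logb, div_eq_mul_inv] using h
  have hLx : HasDerivAt (fun y : ℝ => Real.logb 2 y) (1 / x / Real.log 2) x := by
    have h := ((Real.hasDerivAt_log hx0)).div_const (Real.log 2)
    simpa [Real.logb, div_eq_mul_inv] using h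
  have H := (h1.sub (h3.mul hL)).add hLx
  convert H using 1
  · rfl
  · rfl
  · rfl
  field_simp
  ring

private lemma stmt10_deriv (x : ℝ) (hx : 2 < x) :
    deriv (fun x : ℝ => -2 / x - (1 - 2 / x) * Real.logb 2 (x - 2) + Real.logb 2 x) x
      = 2 / x ^ 2 * (1 - Real.logb 2 (x - 2)) := (stmt10_hasDeriv x hx).deriv

theorem stmt_10 :
    (fun x : ℝ => -2 / x - (1 - 2 / x) * Real.logb 2 (x - 2) + Real.logb 2 x) 4 = 1 ∧
      StrictMonoOn
        (fun x : ℝ => -2 / x - (1 - 2 / x) * Real.logb 2 (x - 2) + Real.logb 2 x)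
        (Set.Ioc 2 4) ∧
      StrictAntiOn
        (fun x : ℝ => -2 / x - (1 - 2 / x) * Real.logb 2 (x - 2) + Real.logb 2 x)
        (Set.Ici 4) ∧
      ∀ x : ℝ, 2 < x → x ≠ 4 →
        -2 / x - (1 - 2 / x) * Real.logb 2 (x - 2) + Real.logb 2 x < 1 := by
  set f : ℝ → ℝ := fun x : ℝ => -2 / x - (1 - 2 / x) * Real.logb 2 (x - 2) + Real.logb 2 x with hf
  have hlogb2 : Real.logb 2 2 = 1 := by simp [Real.logb, div_self (ne_of_gt (Real.log_pos one_lt_two))]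
  have hlogb4 : Real.logb 2 4 = 2 := by
    rw [show (4 : ℝ) = 2 ^ (2 : ℕ) by norm_num, Real.logb_pow, hlogb2]; norm_num
  have hf4 : f 4 = 1 := by
    simp only [hf]
    norm_num [hlogb2, hlogb4]
  have hmono : StrictMonoOn f (Set.Ioc 2 4) := by
    apply strictMonoOn_of_deriv_pos (convex_Ioc 2 4)
    · exact fun x hx => ((stmt10_hasDeriv x hx.1).continuousAt).continuousWithinAt
    · intro x hx
      rw [interior_Ioc] at hx
      obtain ⟨hxl, hxr⟩ := hx
      rw [stmt10_deriv x hxl]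
      have hx0 : 0 < x := by linarith
      have h1 : 0 < 2 / x ^ 2 := by positivity
      have h2 : Real.logb 2 (x - 2) < 1 := by
        rw [← hlogb2]
        exact Real.logb_lt_logb (by norm_num) (by linarith) (by linarith)
      nlinarith
  have hanti : StrictAntiOn f (Set.Ici 4) := by
    apply strictAntiOn_of_deriv_neg (convex_Ici 4)
    · exact fun x hx => ((stmt10_hasDeriv x (by linarith [mem_Ici.mp hx])).continuousAt).continuousWithinAt
    · intro x hx
      rw [interior_Ici] at hx
      have hx4 : (4 : ℝ) < x := hx
      rw [stmt10_deriv x (by linarith)]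
      have h1 : 0 < 2 / x ^ 2 := by positivity
      have h2 : 1 < Real.logb 2 (x - 2) := by
        rw [← hlogb2]
        exact Real.logb_lt_logb (by norm_num) (by norm_num) (by linarith)
      nlinarith
  refine ⟨hf4, hmono, hanti, ?_⟩
  intro x hx2 hx4
  rcases lt_or_gt_of_ne hx4 with h | h
  · have := hmono (Set.mem_Ioc.mpr ⟨hx2, le_of_lt h⟩) (Set.mem_Ioc.mpr ⟨by norm_num, le_refl 4⟩) h
    rw [hf4] at this; exact this
  · have := hanti (Set.mem_Ici.mpr le_rfl) (Set.mem_Ici.mpr (le_of_lt h)) h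
    rw [hf4] at this; exact this
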